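/- Weighted completion time recombinant property: for jobs with weights $w_i>0$ and a partition of $[n]$ into $A$ (with known sizes $v_i\ge 0$) and $\bar A$ (with expected sizes $\mu_j\ge 0$), the optimal weighted completion time over all jobs, $\sum_{i,j\in A, j\ge i}\min(w_j v_i, w_i v_j) + \sum_{i,j\in \bar A, j\ge i}\min(w_j\mu_i, w_i\mu_j) + \sum_{i\in A, j\in \bar A}\min(w_j v_i, w_i\mu_j)$, is at most twice the sum of the optimal completion time on $A$ alone, $\sum_{i,j\in A, j\ge i}\min(w_j v_i, w_i v_j)$, plus the optimal completion time on $\bar A$ alone, $\sum_{i,j\in \bar A, j\ge i}\min(w_j\mu_i, w_i\mu_j)$. -/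

import Mathlib

/-- The `min` kernel is positive semidefinite on nonnegative values. -/
lemma min_kernel_psd {ι : Type*} [DecidableEq ι] (S : Finset ι) :
    ∀ (r x : ι → ℝ), (∀ i ∈ S, 0 ≤ r i) →
      0 ≤ ∑ i ∈ S, ∑ j ∈ S, x i * x j * min (r i) (r j) := by
  induction S using Finset.strongInduction with
  | _ S ih =>
    intro r x hr
    rcases S.eq_empty_or_nonempty with h | h
    · simp [h]
    obtain ⟨m, hm, hmin⟩ := S.exists_min_image r h
    have key : ∀ i ∈ S, ∀ j ∈ S, x i * x j * min (r i) (r j)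
        = x i * x j * min (r i - r m) (r j - r m) + r m * (x i * x j) := by
      intro i hi j hj
      have : min (r i) (r j) = min (r i - r m) (r j - r m) + r m := by
        rw [← min_add_add_right]; ring_nf
      rw [this]; ring
    have expand : ∑ i ∈ S, ∑ j ∈ S, x i * x j * min (r i) (r j)
        = (∑ i ∈ S, ∑ j ∈ S, x i * x j * min (r i - r m) (r j - r m))
          + r m * (∑ i ∈ S, x i) ^ 2 := by
      rw [Finset.sum_congr rfl (fun i hi => Finset.sum_congr rfl (fun j hj => key i hi j hj))]
      rw [show ((∑ i ∈ S, x i) ^ 2 : ℝ) = ∑ i ∈ S, ∑ j ∈ S, x i * x j by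
        rw [sq, Finset.sum_mul_sum]]
      rw [Finset.mul_sum]
      rw [← Finset.sum_add_distrib]
      apply Finset.sum_congr rfl
      intro i _
      rw [Finset.mul_sum, ← Finset.sum_add_distrib]
    rw [expand]
    have h2 : 0 ≤ r m * (∑ i ∈ S, x i) ^ 2 :=
      mul_nonneg (hr m hm) (sq_nonneg _)
    have hzero : ∀ j ∈ S, ∀ c : ℝ, c * min (r m - r m) (r j - r m) = 0 := by
      intro j hj c
      rw [sub_self, min_eq_left (by linarith [hmin j hj])]
      ring
    have hstep : ∑ i ∈ S, ∑ j ∈ S, x i * x j * min (r i - r m) (r j - r m)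
        = ∑ i ∈ S.erase m, ∑ j ∈ S.erase m, x i * x j * min (r i - r m) (r j - r m) := by
      rw [← Finset.add_sum_erase S _ hm]
      have hrow : ∑ j ∈ S, x m * x j * min (r m - r m) (r j - r m) = 0 := by
        apply Finset.sum_eq_zero
        intro j hj
        exact hzero j hj _
      rw [hrow, zero_add]
      apply Finset.sum_congr rfl
      intro i hi
      rw [← Finset.add_sum_erase S _ hm]
      have : x i * x m * min (r i - r m) (r m - r m) = 0 := by
        rw [min_comm]
        exact hzero i (Finset.mem_of_mem_erase hi) _
      rw [this, zero_add]
    rw [hstep]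
    have h1 : 0 ≤ ∑ i ∈ S.erase m, ∑ j ∈ S.erase m, x i * x j * min (r i - r m) (r j - r m) := by
      apply ih (S.erase m) (Finset.erase_ssubset hm)
      intro i hi
      have := hmin i (Finset.mem_of_mem_erase hi)
      linarith
    linarith

/-- Symmetrization: a full double sum of a symmetric function with nonnegative
diagonal is at most twice the "upper triangle" sum. -/
lemma sym_bound {ι : Type*} [LinearOrder ι] (S : Finset ι) (f : ι → ι → ℝ)
    (hsymm : ∀ i j, f i j = f j i) (hdiag : ∀ i, 0 ≤ f i i) :
    ∑ i ∈ S, ∑ j ∈ S, f i j ≤ 2 * ∑ i ∈ S, ∑ j ∈ S.filter (fun j => i ≤ j), f i j := by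
  have hsplit : ∑ i ∈ S, ∑ j ∈ S, f i j
      = (∑ i ∈ S, ∑ j ∈ S, if i ≤ j then f i j else 0)
        + ∑ i ∈ S, ∑ j ∈ S, if j < i then f i j else 0 := by
    rw [← Finset.sum_add_distrib]
    apply Finset.sum_congr rfl
    intro i _
    rw [← Finset.sum_add_distrib]
    apply Finset.sum_congr rfl
    intro j _
    rcases le_or_gt i j with h | h
    · simp [h, not_lt.mpr h]
    · simp [h, not_le.mpr h]
  have hub : ∑ i ∈ S, ∑ j ∈ S.filter (fun j => i ≤ j), f i j
      = ∑ i ∈ S, ∑ j ∈ S, if i ≤ j then f i j else 0 := by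
    apply Finset.sum_congr rfl
    intro i _
    rw [Finset.sum_filter]
  have hlow : (∑ i ∈ S, ∑ j ∈ S, if j < i then f i j else 0)
      ≤ ∑ i ∈ S, ∑ j ∈ S, if i ≤ j then f i j else 0 := by
    rw [Finset.sum_comm]
    apply Finset.sum_le_sum
    intro i _
    apply Finset.sum_le_sum
    intro j _
    rcases lt_trichotomy i j with h | h | h
    · simp [h, le_of_lt h, hsymm j i]
    · subst h
      simp [hdiag i]
    · simp [not_lt.mpr (le_of_lt h), not_le.mpr h]
  rw [hsplit, hub]
  linarith

/-- Recombinant property (P2) with `ρ = 2` for weighted completion time: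
the optimal completion time over all jobs (probed jobs `A` with realized sizes `v`,
unprobed jobs `B = Ā` with expected sizes `μ`) is at most twice the sum of the
optima on each part alone. -/
theorem completion_time_recombinant {n : ℕ} (w v μ : Fin n → ℝ)
    (hw : ∀ i, 0 < w i) (hv : ∀ i, 0 ≤ v i) (hμ : ∀ i, 0 ≤ μ i)
    (A B : Finset (Fin n)) (hdisj : Disjoint A B) (hcover : A ∪ B = Finset.univ) :
    (∑ i ∈ A, ∑ j ∈ A.filter (fun j => i ≤ j), min (w j * v i) (w i * v j)) +
    (∑ i ∈ B, ∑ j ∈ B.filter (fun j => i ≤ j), min (w j * μ i) (w i * μ j)) +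
    (∑ i ∈ A, ∑ j ∈ B, min (w j * v i) (w i * μ j)) ≤
    2 * ((∑ i ∈ A, ∑ j ∈ A.filter (fun j => i ≤ j), min (w j * v i) (w i * v j)) +
         (∑ i ∈ B, ∑ j ∈ B.filter (fun j => i ≤ j), min (w j * μ i) (w i * μ j))) := by
  classical
  set l : Fin n → ℝ := fun i => if i ∈ A then v i else μ i with hl
  set f : Fin n → Fin n → ℝ := fun i j => min (w j * l i) (w i * l j) with hf
  set r : Fin n → ℝ := fun i => l i / w i with hr
  set x : Fin n → ℝ := fun i => if i ∈ A then w i else -w i with hx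
  have hlnn : ∀ i, 0 ≤ l i := by
    intro i; simp only [hl]; split <;> [exact hv i; exact hμ i]
  have hBnotA : ∀ i ∈ B, i ∉ A := by
    intro i hi hiA
    exact (Finset.disjoint_left.mp hdisj) hiA hi
  have hfsymm : ∀ i j, f i j = f j i := by
    intro i j; simp only [hf]; rw [min_comm]
  have hfdiag : ∀ i, 0 ≤ f i i := by
    intro i
    simp only [hf, min_self]
    exact mul_nonneg (hw i).le (hlnn i)
  -- the term identity
  have hterm : ∀ i j, w i * w j * min (r i) (r j) = f i j := by
    intro i j
    have hwi := (hw i).ne'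
    have hwj := (hw j).ne'
    have h1 : w i * w j * r i = w j * l i := by
      simp only [hr]; field_simp
    have h2 : w i * w j * r j = w i * l j := by
      simp only [hr]; field_simp
    simp only [hf]
    rw [mul_min_of_nonneg _ _ (mul_nonneg (hw i).le (hw j).le), h1, h2]
  have hxx : ∀ i j, x i * x j * min (r i) (r j)
      = (if i ∈ A then 1 else -1) * (if j ∈ A then 1 else -1) * f i j := by
    intro i j
    rw [← hterm i j]
    simp only [hx]
    split <;> split <;> ring
  -- PSD inequality
  have hpsd : 0 ≤ ∑ i ∈ Finset.univ, ∑ j ∈ Finset.univ, x i * x j * min (r i) (r j) := by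
    apply min_kernel_psd
    intro i _
    exact div_nonneg (hlnn i) (hw i).le
  rw [Finset.sum_congr rfl (fun i _ => Finset.sum_congr rfl (fun j _ => hxx i j))] at hpsd
  rw [← hcover] at hpsd
  rw [Finset.sum_union hdisj] at hpsd
  rw [Finset.sum_congr rfl (fun i (_ : i ∈ A) => Finset.sum_union hdisj)] at hpsd
  rw [Finset.sum_congr rfl (fun i (_ : i ∈ B) => Finset.sum_union hdisj)] at hpsd
  rw [Finset.sum_add_distrib, Finset.sum_add_distrib] at hpsd
  have e1 : ∑ i ∈ A, ∑ j ∈ A, (if i ∈ A then (1:ℝ) else -1) * (if j ∈ A then 1 else -1) * f i j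
      = ∑ i ∈ A, ∑ j ∈ A, f i j := by
    apply Finset.sum_congr rfl; intro i hi
    apply Finset.sum_congr rfl; intro j hj
    simp [hi, hj]
  have e2 : ∑ i ∈ A, ∑ j ∈ B, (if i ∈ A then (1:ℝ) else -1) * (if j ∈ A then 1 else -1) * f i j
      = -∑ i ∈ A, ∑ j ∈ B, f i j := by
    rw [← Finset.sum_neg_distrib]
    apply Finset.sum_congr rfl; intro i hi
    rw [← Finset.sum_neg_distrib]
    apply Finset.sum_congr rfl; intro j hj
    simp [hi, hBnotA j hj]
  have e3 : ∑ i ∈ B, ∑ j ∈ A, (if i ∈ A then (1:ℝ) else -1) * (if j ∈ A then 1 else -1) * f i j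
      = -∑ i ∈ A, ∑ j ∈ B, f i j := by
    have step : ∀ i ∈ B, ∑ j ∈ A, (if i ∈ A then (1:ℝ) else -1) * (if j ∈ A then 1 else -1) * f i j
        = ∑ j ∈ A, -(f j i) := by
      intro i hi
      apply Finset.sum_congr rfl; intro j hj
      simp [hj, hBnotA i hi, hfsymm i j]
    rw [Finset.sum_congr rfl step]
    simp only [Finset.sum_neg_distrib]
    congr 1
    exact Finset.sum_comm
  have e4 : ∑ i ∈ B, ∑ j ∈ B, (if i ∈ A then (1:ℝ) else -1) * (if j ∈ A then 1 else -1) * f i j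
      = ∑ i ∈ B, ∑ j ∈ B, f i j := by
    apply Finset.sum_congr rfl; intro i hi
    apply Finset.sum_congr rfl; intro j hj
    simp [hBnotA i hi, hBnotA j hj]
  rw [e1, e2, e3, e4] at hpsd
  -- symmetrization bounds
  have bA := sym_bound A f hfsymm hfdiag
  have bB := sym_bound B f hfsymm hfdiag
  -- identify with stated sums
  have idA : ∑ i ∈ A, ∑ j ∈ A.filter (fun j => i ≤ j), f i j
      = ∑ i ∈ A, ∑ j ∈ A.filter (fun j => i ≤ j), min (w j * v i) (w i * v j) := by
    apply Finset.sum_congr rfl; intro i hi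
    apply Finset.sum_congr rfl; intro j hj
    have hj' : j ∈ A := Finset.mem_of_mem_filter j hj
    simp [hf, hl, hi, hj']
  have idB : ∑ i ∈ B, ∑ j ∈ B.filter (fun j => i ≤ j), f i j
      = ∑ i ∈ B, ∑ j ∈ B.filter (fun j => i ≤ j), min (w j * μ i) (w i * μ j) := by
    apply Finset.sum_congr rfl; intro i hi
    apply Finset.sum_congr rfl; intro j hj
    have hj' : j ∈ B := Finset.mem_of_mem_filter j hj
    simp [hf, hl, hBnotA i hi, hBnotA j hj']
  have idC : ∑ i ∈ A, ∑ j ∈ B, f i j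
      = ∑ i ∈ A, ∑ j ∈ B, min (w j * v i) (w i * μ j) := by
    apply Finset.sum_congr rfl; intro i hi
    apply Finset.sum_congr rfl; intro j hj
    simp [hf, hl, hi, hBnotA j hj]
  rw [idA] at bA
  rw [idB] at bB
  rw [idC] at hpsd
  linarith [bA, bB, hpsd]
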